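/- Let q, t, s₁, s₂ be nonzero complex numbers such that (q;q)_k ≠ 0 and (q s₁/s₂;q)_k ≠ 0 for all k ≥ 1. Define g₀ = 1 and g_k = [(q t^{−1};q)_k (q t^{−1} s₁/s₂;q)_k / ((q;q)_k (q s₁/s₂;q)_k)] t^k for k ≥ 1. Then for every k ≥ 1 the recurrence (s₁ q^k + s₂ q^{−k}) g_k − (s₁ q^k t^{−1} + s₂ t q^{−k}) g_{k−1} = (s₁ + s₂)(g_k − g_{k−1}) holds; equivalently, the formal power series g(ζ) = Σ_{k≥0} g_k ζ^k satisfies the q-difference equation s₁(1 − q t^{−1}ζ) g(qζ) + s₂(1 − q^{−1} t ζ) g(q^{−1}ζ) = (s₁ + s₂)(1 − ζ) g(ζ), so that f₀(ζ₁,ζ₂) = (1 − ζ₂/ζ₁)·₂φ₁(q t^{−1}, q t^{−1}s₁/s₂; q s₁/s₂; q, t ζ₂/ζ₁) is an eigenfunction of the n = 2 Macdonald-type difference operator D with eigenvalue s₁ + s₂. -/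

import Mathlib

/-- The q-shifted factorial `(a;q)_n = ∏_{k=0}^{n−1} (1 − a q^k)`. -/
noncomputable def qp (q a : ℂ) (n : ℕ) : ℂ := ∏ k ∈ Finset.range n, (1 - a * q ^ k)

set_option maxHeartbeats 1000000 in
/-- The coefficients
`g_k = (q t⁻¹;q)_k (q t⁻¹ s₁/s₂;q)_k / ((q;q)_k (q s₁/s₂;q)_k) · t^k` (with `g₀ = 1`)
satisfy, for every `k ≥ 1`, the recurrence
`(s₁ q^k + s₂ q^{−k}) g_k − (s₁ q^k t⁻¹ + s₂ t q^{−k}) g_{k−1} = (s₁+s₂)(g_k − g_{k−1})`,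
i.e. `f₀ = (1 − ζ₂/ζ₁)·₂φ₁(qt⁻¹, qt⁻¹s₁/s₂; qs₁/s₂; q, tζ₂/ζ₁)` is an eigenfunction of
the `n = 2` Macdonald-type difference operator with eigenvalue `s₁ + s₂`. -/
theorem statement2 (q t s₁ s₂ : ℂ) (hq : q ≠ 0) (ht : t ≠ 0)
    (hs₁ : s₁ ≠ 0) (hs₂ : s₂ ≠ 0)
    (hqq : ∀ k : ℕ, 1 ≤ k → qp q q k ≠ 0)
    (hqs : ∀ k : ℕ, 1 ≤ k → qp q (q * s₁ / s₂) k ≠ 0)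
    (g : ℕ → ℂ)
    (hg : ∀ k : ℕ, g k =
      qp q (q * t⁻¹) k * qp q (q * t⁻¹ * s₁ / s₂) k /
        (qp q q k * qp q (q * s₁ / s₂) k) * t ^ k) :
    ∀ k : ℕ, 1 ≤ k →
      (s₁ * q ^ k + s₂ * (q ^ k)⁻¹) * g k
          - (s₁ * q ^ k * t⁻¹ + s₂ * t * (q ^ k)⁻¹) * g (k - 1)
        = (s₁ + s₂) * (g k - g (k - 1)) := by
  rintro (_ | m) hk
  · omega
  have hstep : ∀ a : ℂ, qp q a (m + 1) = qp q a m * (1 - a * q ^ m) := by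
    intro a; simp [qp, Finset.prod_range_succ]
  have hC : qp q q m ≠ 0 := by
    cases m with
    | zero => simp [qp]
    | succ n => exact hqq _ (by omega)
  have hD : qp q (q * s₁ / s₂) m ≠ 0 := by
    cases m with
    | zero => simp [qp]
    | succ n => exact hqs _ (by omega)
  have hc : 1 - q * q ^ m ≠ 0 := by
    have := hqq (m + 1) (by omega)
    rw [hstep] at this
    exact (mul_ne_zero_iff.mp this).2
  have hd : 1 - (q * s₁ / s₂) * q ^ m ≠ 0 := by
    have := hqs (m + 1) (by omega)
    rw [hstep] at this
    exact (mul_ne_zero_iff.mp this).2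
  have hqm : q ^ m ≠ 0 := pow_ne_zero _ hq
  have hqm1 : (q : ℂ) ^ (m + 1) ≠ 0 := pow_ne_zero _ hq
  have hrel : g (m + 1) * ((1 - q * q ^ m) * (1 - (q * s₁ / s₂) * q ^ m))
      = g m * ((1 - (q * t⁻¹) * q ^ m) * (1 - (q * t⁻¹ * s₁ / s₂) * q ^ m) * t) := by
    rw [hg (m + 1), hg m, hstep, hstep, hstep, hstep, pow_succ]
    set A := qp q (q * t⁻¹) m
    set B := qp q (q * t⁻¹ * s₁ / s₂) m
    set C := qp q q m
    set D := qp q (q * s₁ / s₂) m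
    set a := 1 - (q * t⁻¹) * q ^ m
    set b := 1 - (q * t⁻¹ * s₁ / s₂) * q ^ m
    set c := 1 - q * q ^ m
    set d := 1 - (q * s₁ / s₂) * q ^ m
    set x := t ^ m
    clear_value A B C D a b c d x
    field_simp
  have key : (s₁ * q ^ (m + 1) + s₂ * (q ^ (m + 1))⁻¹ - (s₁ + s₂)) *
        ((1 - (q * t⁻¹) * q ^ m) * (1 - (q * t⁻¹ * s₁ / s₂) * q ^ m) * t)
      = (s₁ * q ^ (m + 1) * t⁻¹ + s₂ * t * (q ^ (m + 1))⁻¹ - (s₁ + s₂)) *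
        ((1 - q * q ^ m) * (1 - (q * s₁ / s₂) * q ^ m)) := by
    rw [pow_succ]
    set y := q ^ m
    clear_value y
    field_simp
    ring
  have hcd : (1 - q * q ^ m) * (1 - (q * s₁ / s₂) * q ^ m) ≠ 0 := mul_ne_zero hc hd
  simp only [Nat.add_sub_cancel]
  apply mul_right_cancel₀ hcd
  linear_combination (s₁ * q ^ (m + 1) + s₂ * (q ^ (m + 1))⁻¹ - (s₁ + s₂)) * hrel
    + g m * key
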